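/- Let X be a continuous domain with Scott topology. Then the ⇒_U-convergence topology on UX = {↑F : F nonempty finite ⊆ X} equals the relative Scott topology inherited from the dcpo Q(X) of nonempty compact saturated subsets of X ordered by reverse inclusion: O_{⇒U}(UX) = σ(Q(X))|_{UX}. -/

import Mathlib

variable {X : Type*}

/-- The specialization order: `x ⊑ y` iff `x ∈ closure {y}`. -/
def sle [TopologicalSpace X] (x y : X) : Prop := x ∈ closure {y}

/-- A directed subset with respect to the specialization order. -/
def IsDirSet [TopologicalSpace X] (D : Set X) : Prop :=
  D.Nonempty ∧ ∀ a ∈ D, ∀ b ∈ D, ∃ c ∈ D, sle a c ∧ sle b c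

/-- `DConv D x`: the directed set `D`, viewed as a net (indexed by itself with
the specialization order), converges to `x`. -/
def DConv [TopologicalSpace X] (D : Set X) (x : X) : Prop :=
  IsDirSet D ∧ ∀ U : Set X, IsOpen U → x ∈ U → ∃ d ∈ D, ∀ e ∈ D, sle d e → e ∈ U

/-- Directed open set. -/
def DOpen [TopologicalSpace X] (U : Set X) : Prop :=
  ∀ D : Set X, ∀ x : X, DConv D x → x ∈ U → (D ∩ U).Nonempty

/-- A directed space: every directed open set is open. -/
def IsDirectedSpace (X : Type*) [TopologicalSpace X] : Prop :=
  ∀ U : Set X, DOpen U → IsOpen U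

/-- Up-closure with respect to the specialization order. -/
def ucl [TopologicalSpace X] (F : Set X) : Set X := {x | ∃ a ∈ F, sle a x}

/-- Membership in `UX`: up-closures of nonempty finite sets. -/
def InUX [TopologicalSpace X] (A : Set X) : Prop :=
  ∃ F : Finset X, F.Nonempty ∧ A = ucl (F : Set X)

/-- A family of elements of `UX`, directed with respect to reverse inclusion. -/
def UDir [TopologicalSpace X] (ℱ : Set (Set X)) : Prop :=
  (∀ B ∈ ℱ, InUX B) ∧ ℱ.Nonempty ∧ ∀ A ∈ ℱ, ∀ B ∈ ℱ, ∃ C ∈ ℱ, C ⊆ A ∧ C ⊆ B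

/-- The convergence `ℱ ⇒_U ↑F`. -/
def UConv [TopologicalSpace X] (ℱ : Set (Set X)) (A : Set X) : Prop :=
  UDir ℱ ∧ ∃ F : Finset X, F.Nonempty ∧ A = ucl (F : Set X) ∧
    ∃ (n : ℕ) (D : Fin n → Set X),
      (∀ i, ∃ a ∈ F, DConv (D i) a) ∧
      (∀ a ∈ F, ∃ i, DConv (D i) a) ∧
      (∀ d : Fin n → X, (∀ i, d i ∈ D i) → ∃ B ∈ ℱ, B ⊆ ⋃ i, ucl {d i})

/-- `⇒_U`-convergence open subsets of `UX`. -/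
def UOpen [TopologicalSpace X] (𝒰 : Set (Set X)) : Prop :=
  (∀ A ∈ 𝒰, InUX A) ∧ ∀ ℱ A, UConv ℱ A → A ∈ 𝒰 → (ℱ ∩ 𝒰).Nonempty

/-- Scott-open subsets of a preordered set. -/
def ScottOpens [Preorder X] (U : Set X) : Prop :=
  IsUpperSet U ∧ ∀ D : Set X, D.Nonempty → DirectedOn (· ≤ ·) D →
    ∀ a, IsLUB D a → a ∈ U → (D ∩ U).Nonempty

/-- Scott-closed subsets. -/
def ScottClosedSet [Preorder X] (A : Set X) : Prop :=
  IsLowerSet A ∧ ∀ D : Set X, D ⊆ A → D.Nonempty → DirectedOn (· ≤ ·) D →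
    ∀ a, IsLUB D a → a ∈ A

/-- Nonempty Scott-closed set (element of `C(P)`). -/
def IsCl [Preorder X] (A : Set X) : Prop := A.Nonempty ∧ ScottClosedSet A

/-- `S` is the least upper bound in `C(P)` (ordered by inclusion) of the family `𝒟`. -/
def IsLubCl [Preorder X] (𝒟 : Set (Set X)) (S : Set X) : Prop :=
  IsCl S ∧ (∀ A ∈ 𝒟, A ⊆ S) ∧ ∀ T, IsCl T → (∀ A ∈ 𝒟, A ⊆ T) → S ⊆ T

/-- Scott-open family of nonempty Scott-closed sets, i.e. Scott-open subsets of `C(P)`. -/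
def SOC [Preorder X] (𝒲 : Set (Set X)) : Prop :=
  (∀ A ∈ 𝒲, IsCl A) ∧
  (∀ A B, A ∈ 𝒲 → IsCl B → A ⊆ B → B ∈ 𝒲) ∧
  ∀ 𝒟 S, (∀ A ∈ 𝒟, IsCl A) → 𝒟.Nonempty → DirectedOn (· ⊆ ·) 𝒟 →
    IsLubCl 𝒟 S → S ∈ 𝒲 → (𝒟 ∩ 𝒲).Nonempty

/-- The way-below relation. -/
def wayBelow [Preorder X] (y x : X) : Prop :=
  ∀ D : Set X, D.Nonempty → DirectedOn (· ≤ ·) D → ∀ a, IsLUB D a → x ≤ a → ∃ d ∈ D, y ≤ d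

/-- A continuous domain: a dcpo in which every element is the directed supremum
of the elements way below it. -/
def IsContinuousDomain (X : Type*) [Preorder X] : Prop :=
  (∀ D : Set X, D.Nonempty → DirectedOn (· ≤ ·) D → ∃ a, IsLUB D a) ∧
  ∀ x : X, {y | wayBelow y x}.Nonempty ∧ DirectedOn (· ≤ ·) {y | wayBelow y x} ∧
    IsLUB {y | wayBelow y x} x

/-- Nonempty compact saturated set. -/
def IsQ {P : Type*} [TopologicalSpace P] (K : Set P) : Prop :=
  K.Nonempty ∧ IsCompact K ∧ K = ⋂₀ {U : Set P | IsOpen U ∧ K ⊆ U}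

/-- `S` is the least upper bound in `Q(X)` (ordered by reverse inclusion)
of the family `𝒦`. -/
def IsLubQ {P : Type*} [TopologicalSpace P] (𝒦 : Set (Set P)) (S : Set P) : Prop :=
  IsQ S ∧ (∀ K ∈ 𝒦, S ⊆ K) ∧ ∀ T, IsQ T → (∀ K ∈ 𝒦, T ⊆ K) → T ⊆ S

/-- Scott-open subsets of `Q(X)` ordered by reverse inclusion. -/
def SOQ {P : Type*} [TopologicalSpace P] (𝒲 : Set (Set P)) : Prop :=
  (∀ K ∈ 𝒲, IsQ K) ∧
  (∀ K K' : Set P, K ∈ 𝒲 → IsQ K' → K' ⊆ K → K' ∈ 𝒲) ∧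
  ∀ 𝒦 S, (∀ K ∈ 𝒦, IsQ K) → 𝒦.Nonempty →
    (∀ A ∈ 𝒦, ∀ B ∈ 𝒦, ∃ C ∈ 𝒦, C ⊆ A ∧ C ⊆ B) →
    IsLubQ 𝒦 S → S ∈ 𝒲 → (𝒦 ∩ 𝒲).Nonempty

section Stmt16Aux

variable {P : Type*} [PartialOrder P] [TopologicalSpace P]

lemma s16_sle_refl (x : P) : sle x x := subset_closure rfl

lemma s16_open_upper (hscott : ∀ U : Set P, IsOpen U ↔ ScottOpens U) {U : Set P} (hU : IsOpen U) : IsUpperSet U := ((hscott U).1 hU).1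

lemma s16_notbelow_open (hscott : ∀ U : Set P, IsOpen U ↔ ScottOpens U) (x : P) : IsOpen {y : P | ¬ y ≤ x} := by
  rw [hscott]
  constructor
  · intro a b hab ha hb
    exact ha (hab.trans hb)
  · intro D hne hdir a hlub ha
    by_contra h
    refine ha (hlub.2 ?_)
    intro d hd
    by_contra hdx
    exact h ⟨d, hd, hdx⟩

lemma s16_downset_closed (hscott : ∀ U : Set P, IsOpen U ↔ ScottOpens U) (x : P) : IsClosed {y : P | y ≤ x} := by
  rw [← isOpen_compl_iff]
  exact s16_notbelow_open hscott x

lemma s16_sle_iff_le (hscott : ∀ U : Set P, IsOpen U ↔ ScottOpens U) {x y : P} : sle x y ↔ x ≤ y := by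
  constructor
  · intro h
    refine closure_minimal ?_ (s16_downset_closed hscott y) h
    intro z hz
    rw [Set.mem_singleton_iff] at hz
    exact hz ▸ le_rfl
  · intro h
    have hlow : IsLowerSet (closure {y}) := by
      have := (s16_open_upper hscott (isClosed_closure (s := ({y} : Set P))).isOpen_compl).compl
      simpa using this
    exact hlow h (subset_closure rfl)

lemma s16_closed_lower (hscott : ∀ U : Set P, IsOpen U ↔ ScottOpens U) {C : Set P} (hC : IsClosed C) : IsLowerSet C := by
  have := (s16_open_upper hscott hC.isOpen_compl).compl
  simpa using this

lemma s16_closed_dsup (hscott : ∀ U : Set P, IsOpen U ↔ ScottOpens U) {C D : Set P} {a : P} (hC : IsClosed C) (hD : D ⊆ C)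
    (hne : D.Nonempty) (hdir : DirectedOn (· ≤ ·) D) (ha : IsLUB D a) : a ∈ C := by
  by_contra h
  obtain ⟨d, hd, hdc⟩ := ((hscott _).1 hC.isOpen_compl).2 D hne hdir a ha h
  exact hdc (hD hd)

lemma s16_wb_le {y x : P} (h : wayBelow y x) : y ≤ x := by
  obtain ⟨d, hd, hyd⟩ := h {x} ⟨x, rfl⟩
    (fun a ha b hb => ⟨x, rfl, by simp_all, by simp_all⟩) x isLUB_singleton le_rfl
  rw [Set.mem_singleton_iff] at hd
  exact hd ▸ hyd

lemma s16_wb_mono_left {a b c : P} (hab : a ≤ b) (h : wayBelow b c) : wayBelow a c :=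
  fun D h1 h2 x hx hcx => by
    obtain ⟨d, hd, hbd⟩ := h D h1 h2 x hx hcx
    exact ⟨d, hd, hab.trans hbd⟩

lemma s16_wb_mono_right {a b c : P} (h : wayBelow a b) (hbc : b ≤ c) : wayBelow a c :=
  fun D h1 h2 x hx hcx => h D h1 h2 x hx (hbc.trans hcx)

lemma s16_interp (hcont : IsContinuousDomain P) {d x : P} (h : wayBelow d x) : ∃ e, wayBelow d e ∧ wayBelow e x := by
  set D := {z : P | ∃ y, wayBelow z y ∧ wayBelow y x} with hDdef
  have hne : D.Nonempty := by
    obtain ⟨y, hy⟩ := (hcont.2 x).1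
    obtain ⟨z, hz⟩ := (hcont.2 y).1
    exact ⟨z, y, hz, hy⟩
  have hdir : DirectedOn (· ≤ ·) D := by
    rintro z₁ ⟨y₁, hz₁, hy₁⟩ z₂ ⟨y₂, hz₂, hy₂⟩
    obtain ⟨y₃, hy₃, h13, h23⟩ := (hcont.2 x).2.1 y₁ hy₁ y₂ hy₂
    obtain ⟨z₃, hz₃, hz13, hz23⟩ := (hcont.2 y₃).2.1 z₁ (s16_wb_mono_right hz₁ h13) z₂
      (s16_wb_mono_right hz₂ h23)
    exact ⟨z₃, ⟨y₃, hz₃, hy₃⟩, hz13, hz23⟩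
  have hlub : IsLUB D x := by
    constructor
    · rintro z ⟨y, hzy, hyx⟩
      exact (s16_wb_le hzy).trans (s16_wb_le hyx)
    · intro u hu
      refine (hcont.2 x).2.2.2 ?_
      intro y hy
      refine (hcont.2 y).2.2.2 ?_
      intro z hz
      exact hu ⟨y, hz, hy⟩
  obtain ⟨z, hzD, hdz⟩ := h D hne hdir x hlub le_rfl
  obtain ⟨y, hzy, hyx⟩ := hzD
  exact ⟨y, s16_wb_mono_left hdz hzy, hyx⟩

lemma s16_wbabove_open (hscott : ∀ U : Set P, IsOpen U ↔ ScottOpens U) (hcont : IsContinuousDomain P) (d : P) : IsOpen {x : P | wayBelow d x} := by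
  rw [hscott]
  constructor
  · intro a b hab ha
    exact s16_wb_mono_right ha hab
  · intro D hne hdir a hlub ha
    obtain ⟨e, hde, hea⟩ := s16_interp hcont ha
    obtain ⟨z, hz, hez⟩ := hea D hne hdir a hlub le_rfl
    exact ⟨z, hz, s16_wb_mono_right hde hez⟩

lemma s16_mem_open_wb (hscott : ∀ U : Set P, IsOpen U ↔ ScottOpens U) (hcont : IsContinuousDomain P) {x : P} {U : Set P} (hU : IsOpen U) (hx : x ∈ U) :
    ∃ d, wayBelow d x ∧ d ∈ U := by
  obtain ⟨ne, dir, lub⟩ := hcont.2 x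
  obtain ⟨d, hd, hdU⟩ := ((hscott U).1 hU).2 _ ne dir x lub hx
  exact ⟨d, hd, hdU⟩

lemma s16_mem_ucl (hscott : ∀ U : Set P, IsOpen U ↔ ScottOpens U) {F : Set P} {x : P} : x ∈ ucl F ↔ ∃ a ∈ F, a ≤ x := by
  unfold ucl
  simp only [Set.mem_setOf_eq, s16_sle_iff_le hscott]

lemma s16_ucl_upper (hscott : ∀ U : Set P, IsOpen U ↔ ScottOpens U) (F : Set P) : IsUpperSet (ucl F) := by
  intro a b hab ha
  rw [s16_mem_ucl hscott] at ha ⊢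
  obtain ⟨c, hc, hca⟩ := ha
  exact ⟨c, hc, hca.trans hab⟩

lemma s16_self_mem_ucl {F : Set P} {a : P} (ha : a ∈ F) : a ∈ ucl F :=
  ⟨a, ha, s16_sle_refl a⟩

lemma s16_ucl_subset_ucl (hscott : ∀ U : Set P, IsOpen U ↔ ScottOpens U) {A B : Set P} (h : A ⊆ ucl B) : ucl A ⊆ ucl B := by
  intro x hx
  rw [s16_mem_ucl hscott] at hx ⊢
  obtain ⟨a, haA, hax⟩ := hx
  obtain ⟨b, hbB, hba⟩ := (s16_mem_ucl hscott).1 (h haA)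
  exact ⟨b, hbB, hba.trans hax⟩

lemma s16_ucl_compact (hscott : ∀ U : Set P, IsOpen U ↔ ScottOpens U) (F : Finset P) : IsCompact (ucl (F : Set P)) := by
  classical
  apply isCompact_of_finite_subcover
  intro ι U hUo hcov
  have hch : ∀ a : {x // x ∈ F}, ∃ i, (a : P) ∈ U i := by
    intro a
    have : (a : P) ∈ ⋃ i, U i := hcov (s16_self_mem_ucl (Finset.mem_coe.2 a.2))
    simpa using this
  choose f hf using hch
  refine ⟨F.attach.image f, ?_⟩
  intro x hx
  obtain ⟨a, haF, hax⟩ := (s16_mem_ucl hscott).1 hx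
  rw [Finset.mem_coe] at haF
  have : x ∈ U (f ⟨a, haF⟩) := s16_open_upper hscott (hUo _) hax (hf ⟨a, haF⟩)
  exact Set.mem_biUnion (Finset.mem_image_of_mem f (F.mem_attach _)) this

lemma s16_upper_sat (hscott : ∀ U : Set P, IsOpen U ↔ ScottOpens U) {K : Set P} (hK : IsUpperSet K) :
    K = ⋂₀ {U : Set P | IsOpen U ∧ K ⊆ U} := by
  apply Set.Subset.antisymm
  · exact fun x hx => Set.mem_sInter.2 fun U hU => hU.2 hx
  · intro x hx
    by_contra hxK
    have hKU : K ⊆ {y : P | ¬ y ≤ x} := by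
      intro k hk hkx
      exact hxK (hK hkx hk)
    have := Set.mem_sInter.1 hx _ ⟨s16_notbelow_open hscott x, hKU⟩
    exact this le_rfl

lemma s16_IsQ_of_InUX (hscott : ∀ U : Set P, IsOpen U ↔ ScottOpens U) {A : Set P} (h : InUX A) : IsQ A := by
  obtain ⟨F, ⟨a, ha⟩, rfl⟩ := h
  exact ⟨⟨a, s16_self_mem_ucl (Finset.mem_coe.2 ha)⟩, s16_ucl_compact hscott F,
    s16_upper_sat hscott (s16_ucl_upper hscott _)⟩

lemma s16_IsQ_upper (hscott : ∀ U : Set P, IsOpen U ↔ ScottOpens U) {K : Set P} (h : IsQ K) : IsUpperSet K := by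
  intro a b hab ha
  rw [h.2.2] at ha ⊢
  exact fun U hU => s16_open_upper hscott hU.1 hab (ha U hU)

lemma s16_dconv_wbs (hscott : ∀ U : Set P, IsOpen U ↔ ScottOpens U) (hcont : IsContinuousDomain P) (a : P) : DConv {y : P | wayBelow y a} a := by
  refine ⟨⟨(hcont.2 a).1, ?_⟩, ?_⟩
  · intro b hb c hc
    obtain ⟨d, hd, hbd, hcd⟩ := (hcont.2 a).2.1 b hb c hc
    exact ⟨d, hd, (s16_sle_iff_le hscott).2 hbd, (s16_sle_iff_le hscott).2 hcd⟩
  · intro U hU ha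
    obtain ⟨d, hda, hdU⟩ := s16_mem_open_wb hscott hcont hU ha
    refine ⟨d, hda, ?_⟩
    intro e he hde
    exact s16_open_upper hscott hU ((s16_sle_iff_le hscott).1 hde) hdU

lemma s16_dconv_point {D : Set P} {x : P} {U : Set P} (h : DConv D x) (hU : IsOpen U)
    (hx : x ∈ U) : ∃ d ∈ D, d ∈ U := by
  obtain ⟨d, hd, htail⟩ := h.2 U hU hx
  exact ⟨d, hd, htail d hd (s16_sle_refl d)⟩

lemma s16_chain_min (t : Finset (Set P)) (hne : t.Nonempty)
    (hch : IsChain (· ⊆ ·) (t : Set (Set P))) : ∃ C₀ ∈ t, ∀ C ∈ t, C₀ ⊆ C := by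
  obtain ⟨C₀, hC₀t, hmin⟩ := Set.Finite.exists_minimalFor id (t : Set (Set P)) t.finite_toSet
    (by obtain ⟨C, hC⟩ := hne; exact ⟨C, Finset.mem_coe.2 hC⟩)
  refine ⟨C₀, Finset.mem_coe.1 hC₀t, ?_⟩
  intro C hC
  rcases eq_or_ne C C₀ with rfl | hne2
  · exact subset_rfl
  · rcases hch (Finset.mem_coe.2 hC) hC₀t hne2 with h | h
    · exact hmin (Finset.mem_coe.2 hC) h
    · exact h

lemma s16_wf (hscott : ∀ U : Set P, IsOpen U ↔ ScottOpens U) (hcont : IsContinuousDomain P)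
    {𝒦 : Set (Set P)} (hQ : ∀ K ∈ 𝒦, IsQ K) (hne : 𝒦.Nonempty)
    (hdir : ∀ A ∈ 𝒦, ∀ B ∈ 𝒦, ∃ C ∈ 𝒦, C ⊆ A ∧ C ⊆ B)
    {U : Set P} (hU : IsOpen U) (hsub : ⋂₀ 𝒦 ⊆ U) : ∃ K ∈ 𝒦, K ⊆ U := by
  classical
  by_contra hcon
  push_neg at hcon
  set S : Set (Set P) := {C | IsClosed C ∧ C ⊆ Uᶜ ∧ ∀ K ∈ 𝒦, (K ∩ C).Nonempty} with hSdef
  have hUc : Uᶜ ∈ S := by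
    refine ⟨hU.isClosed_compl, subset_rfl, ?_⟩
    intro K hK
    obtain ⟨x, hxK, hxU⟩ := Set.not_subset.1 (hcon K hK)
    exact ⟨x, hxK, hxU⟩
  have hH : ∀ c ⊆ S, IsChain (· ⊆ ·) c → c.Nonempty → ∃ lb ∈ S, ∀ s ∈ c, lb ⊆ s := by
    intro c hcS hchain hcne
    refine ⟨⋂₀ c, ⟨?_, ?_, ?_⟩, fun s hs => Set.sInter_subset_of_mem hs⟩
    · exact isClosed_sInter fun C hC => (hcS hC).1
    · obtain ⟨C₀, hC₀⟩ := hcne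
      exact (Set.sInter_subset_of_mem hC₀).trans (hcS hC₀).2.1
    · intro K hK
      by_contra hemp
      have hcov : K ⊆ ⋃ C : c, (↑C : Set P)ᶜ := by
        intro x hxK
        by_contra hx
        simp only [Set.mem_iUnion, Set.mem_compl_iff, not_exists, not_not] at hx
        exact hemp ⟨x, hxK, Set.mem_sInter.2 fun C hC => hx ⟨C, hC⟩⟩
      obtain ⟨t, ht⟩ := (hQ K hK).2.1.elim_finite_subcover (fun C : c => (↑C : Set P)ᶜ)
        (fun C => (hcS C.2).1.isOpen_compl) hcov
      obtain ⟨x, hxK⟩ := (hQ K hK).1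
      obtain ⟨C₁, hC₁t, hxC₁⟩ := Set.mem_iUnion₂.1 (ht hxK)
      have hchain' : IsChain (· ⊆ ·) ((t.image (fun C : c => (C : Set P)) : Finset (Set P)) :
          Set (Set P)) := by
        intro A hA B hB hAB
        simp only [Finset.coe_image, Set.mem_image, Finset.mem_coe] at hA hB
        obtain ⟨A', -, rfl⟩ := hA
        obtain ⟨B', -, rfl⟩ := hB
        exact hchain A'.2 B'.2 hAB
      obtain ⟨C₀, hC₀m, hC₀min⟩ := s16_chain_min (t.image (fun C : c => (C : Set P)))
        ⟨C₁, Finset.mem_image_of_mem _ hC₁t⟩ hchain'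
      obtain ⟨C₀', hC₀'t, hC₀'eq⟩ := Finset.mem_image.1 hC₀m
      obtain ⟨y, hyK, hyC₀⟩ := (hcS C₀'.2).2.2 K hK
      obtain ⟨C₂, hC₂t, hyC₂⟩ := Set.mem_iUnion₂.1 (ht hyK)
      refine hyC₂ ?_
      have : C₀ ⊆ (C₂ : Set P) := hC₀min _ (Finset.mem_image_of_mem _ hC₂t)
      exact this (hC₀'eq ▸ hyC₀)
  obtain ⟨M, hMsub, hMmin⟩ := zorn_superset_nonempty S hH _ hUc
  have hMS : M ∈ S := hMmin.1
  have key : ∀ V : Set P, IsOpen V → (M ∩ V).Nonempty → ∃ K ∈ 𝒦, K ∩ M ⊆ V := by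
    intro V hV hMV
    by_contra h
    push_neg at h
    have hmem : M ∩ Vᶜ ∈ S := by
      refine ⟨hMS.1.inter hV.isClosed_compl, Set.inter_subset_left.trans hMS.2.1, ?_⟩
      intro K hK
      obtain ⟨y, hyKM, hyV⟩ := Set.not_subset.1 (h K hK)
      exact ⟨y, hyKM.1, hyKM.2, hyV⟩
    have hMsub2 : M ⊆ M ∩ Vᶜ := hMmin.2 hmem Set.inter_subset_left
    obtain ⟨x, hxM, hxV⟩ := hMV
    exact (hMsub2 hxM).2 hxV
  set D := {d : P | ∃ a ∈ M, wayBelow d a} with hDdef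
  have hDM : D ⊆ M := by
    rintro d ⟨a, haM, hda⟩
    exact s16_closed_lower hscott hMS.1 (s16_wb_le hda) haM
  have hDne : D.Nonempty := by
    obtain ⟨K₀, hK₀⟩ := hne
    obtain ⟨x, -, hxM⟩ := hMS.2.2 K₀ hK₀
    obtain ⟨d, hd⟩ := (hcont.2 x).1
    exact ⟨d, x, hxM, hd⟩
  have hDdir : DirectedOn (· ≤ ·) D := by
    rintro d₁ ⟨a₁, ha₁, hd₁⟩ d₂ ⟨a₂, ha₂, hd₂⟩
    obtain ⟨K₁, hK₁, hK₁sub⟩ := key _ (s16_wbabove_open hscott hcont d₁) ⟨a₁, ha₁, hd₁⟩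
    obtain ⟨K₂, hK₂, hK₂sub⟩ := key _ (s16_wbabove_open hscott hcont d₂) ⟨a₂, ha₂, hd₂⟩
    obtain ⟨K₃, hK₃, h31, h32⟩ := hdir K₁ hK₁ K₂ hK₂
    obtain ⟨c, hcK₃, hcM⟩ := hMS.2.2 K₃ hK₃
    have h1 : wayBelow d₁ c := hK₁sub ⟨h31 hcK₃, hcM⟩
    have h2 : wayBelow d₂ c := hK₂sub ⟨h32 hcK₃, hcM⟩
    obtain ⟨f, hf, hf1, hf2⟩ := (hcont.2 c).2.1 d₁ h1 d₂ h2
    exact ⟨f, ⟨c, hcM, hf⟩, hf1, hf2⟩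
  obtain ⟨x₀, hx₀⟩ := hcont.1 D hDne hDdir
  have hx₀M : x₀ ∈ M := s16_closed_dsup hscott hMS.1 hDM hDne hDdir hx₀
  have hMle : ∀ a ∈ M, a ≤ x₀ := by
    intro a haM
    exact (hcont.2 a).2.2.2 fun y hy => hx₀.1 ⟨a, haM, hy⟩
  have hx₀K : x₀ ∈ ⋂₀ 𝒦 := by
    refine Set.mem_sInter.2 fun K hK => ?_
    obtain ⟨k, hkK, hkM⟩ := hMS.2.2 K hK
    exact s16_IsQ_upper hscott (hQ K hK) (hMle k hkM) hkK
  exact hMS.2.1 hx₀M (hsub hx₀K)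

lemma s16_isQ_sInter (hscott : ∀ U : Set P, IsOpen U ↔ ScottOpens U)
    (hcont : IsContinuousDomain P) {𝒦 : Set (Set P)} (hQ : ∀ K ∈ 𝒦, IsQ K) (hne : 𝒦.Nonempty)
    (hdir : ∀ A ∈ 𝒦, ∀ B ∈ 𝒦, ∃ C ∈ 𝒦, C ⊆ A ∧ C ⊆ B) : IsQ (⋂₀ 𝒦) := by
  have hupper : IsUpperSet (⋂₀ 𝒦) := fun a b hab ha => Set.mem_sInter.2 fun K hK =>
    s16_IsQ_upper hscott (hQ K hK) hab (Set.mem_sInter.1 ha K hK)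
  refine ⟨?_, ?_, s16_upper_sat hscott hupper⟩
  · by_contra hempty
    rw [Set.not_nonempty_iff_eq_empty] at hempty
    obtain ⟨K, hK, hKsub⟩ := s16_wf hscott hcont hQ hne hdir isOpen_empty hempty.subset
    obtain ⟨x, hx⟩ := (hQ K hK).1
    exact hKsub hx
  · apply isCompact_of_finite_subcover
    intro ι Ucov hUo hcov
    obtain ⟨K, hK, hKsub⟩ := s16_wf hscott hcont hQ hne hdir (isOpen_iUnion hUo) hcov
    obtain ⟨t, ht⟩ := (hQ K hK).2.1.elim_finite_subcover Ucov hUo hKsub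
    exact ⟨t, (Set.sInter_subset_of_mem hK).trans ht⟩

lemma s16_sInter_subset_lubQ (hscott : ∀ U : Set P, IsOpen U ↔ ScottOpens U)
    {𝒦 : Set (Set P)} {S : Set P} (hQ : ∀ K ∈ 𝒦, IsQ K) (hS : IsLubQ 𝒦 S) : ⋂₀ 𝒦 ⊆ S := by
  intro x hx
  have hux : IsQ (ucl {x}) := s16_IsQ_of_InUX hscott
    ⟨{x}, ⟨x, Finset.mem_singleton_self x⟩, by simp⟩
  have hsub : ∀ K ∈ 𝒦, ucl {x} ⊆ K := by
    intro K hK y hy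
    obtain ⟨a, ha, hay⟩ := (s16_mem_ucl hscott).1 hy
    rw [Set.mem_singleton_iff] at ha
    subst ha
    exact s16_IsQ_upper hscott (hQ K hK) hay (Set.mem_sInter.1 hx K hK)
  exact hS.2.2 _ hux hsub (s16_self_mem_ucl rfl)

lemma s16_enum (hscott : ∀ U : Set P, IsOpen U ↔ ScottOpens U)
    (hcont : IsContinuousDomain P) (F : Finset P) :
    ∃ D : Fin F.card → Set P,
      (∀ i, ∃ a ∈ F, DConv (D i) a) ∧
      (∀ a ∈ F, ∃ i, DConv (D i) a) ∧
      (∀ d : Fin F.card → P, (∀ i, d i ∈ D i) →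
        ∀ z ∈ ucl (F : Set P), ∃ i, wayBelow (d i) z) := by
  refine ⟨fun i => {y | wayBelow y ((F.equivFin.symm i : P))}, ?_, ?_, ?_⟩
  · intro i
    exact ⟨(F.equivFin.symm i : P), (F.equivFin.symm i).2, s16_dconv_wbs hscott hcont _⟩
  · intro a ha
    refine ⟨F.equivFin ⟨a, ha⟩, ?_⟩
    simp only [Equiv.symm_apply_apply]
    exact s16_dconv_wbs hscott hcont a
  · intro d hd z hz
    obtain ⟨a, haF, haz⟩ := (s16_mem_ucl hscott).1 hz
    rw [Finset.mem_coe] at haF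
    refine ⟨F.equivFin ⟨a, haF⟩, ?_⟩
    have h1 := hd (F.equivFin ⟨a, haF⟩)
    simp only [Equiv.symm_apply_apply] at h1
    exact s16_wb_mono_right h1 haz

lemma s16_sInter_subset_of_uconv (hscott : ∀ U : Set P, IsOpen U ↔ ScottOpens U)
    {ℱ : Set (Set P)} {A : Set P} (h : UConv ℱ A) : ⋂₀ ℱ ⊆ A := by
  obtain ⟨hdir, F, hFne, rfl, n, D, hD1, hD2, hD3⟩ := h
  intro x hx
  rw [s16_mem_ucl hscott]
  by_contra hcon
  push_neg at hcon
  have hch : ∀ i : Fin n, ∃ d ∈ D i, ¬ d ≤ x := by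
    intro i
    obtain ⟨a, haF, hconv⟩ := hD1 i
    exact s16_dconv_point hconv (s16_notbelow_open hscott x) (hcon a (Finset.mem_coe.2 haF))
  choose d hd hdx using hch
  obtain ⟨B, hBℱ, hBsub⟩ := hD3 d hd
  obtain ⟨i, hxi⟩ := Set.mem_iUnion.1 (hBsub (Set.mem_sInter.1 hx B hBℱ))
  obtain ⟨a, ha, hax⟩ := (s16_mem_ucl hscott).1 hxi
  rw [Set.mem_singleton_iff] at ha
  exact hdx i (ha ▸ hax)

lemma s16_uconv_self (hscott : ∀ U : Set P, IsOpen U ↔ ScottOpens U)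
    (hcont : IsContinuousDomain P) {A A' : Set P} (hA : InUX A) (hA' : InUX A')
    (hsub : A ⊆ A') : UConv {A} A' := by
  obtain ⟨F', hF'ne, rfl⟩ := hA'
  obtain ⟨D, hD1, hD2, hD3⟩ := s16_enum hscott hcont F'
  refine ⟨⟨?_, ⟨A, rfl⟩, ?_⟩, F', hF'ne, rfl, F'.card, D, hD1, hD2, ?_⟩
  · intro B hB
    rw [Set.mem_singleton_iff] at hB
    exact hB ▸ hA
  · intro B hB C hC
    rw [Set.mem_singleton_iff] at hB hC
    exact ⟨A, rfl, hB ▸ subset_rfl, hC ▸ subset_rfl⟩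
  · intro d hd
    refine ⟨A, rfl, ?_⟩
    intro x hxA
    obtain ⟨i, hwb⟩ := hD3 d hd x (hsub hxA)
    exact Set.mem_iUnion.2 ⟨i, (s16_mem_ucl hscott).2 ⟨d i, rfl, s16_wb_le hwb⟩⟩

lemma s16_uopen_up (hscott : ∀ U : Set P, IsOpen U ↔ ScottOpens U)
    (hcont : IsContinuousDomain P) {𝒰 : Set (Set P)} (h𝒰 : UOpen 𝒰) {A A' : Set P}
    (hA : InUX A) (hsub : A ⊆ A') (hA' : A' ∈ 𝒰) : A ∈ 𝒰 := by
  obtain ⟨B, hB1, hB2⟩ := h𝒰.2 {A} A' (s16_uconv_self hscott hcont hA (h𝒰.1 A' hA') hsub) hA'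
  rw [Set.mem_singleton_iff] at hB1
  exact hB1 ▸ hB2

lemma s16_cover (hscott : ∀ U : Set P, IsOpen U ↔ ScottOpens U)
    (hcont : IsContinuousDomain P) {K : Set P} (hK : IsCompact K) (hKne : K.Nonempty)
    {T : Set P} (hcov : ∀ x ∈ K, ∃ y ∈ T, wayBelow y x) :
    ∃ E : Finset P, E.Nonempty ∧ (↑E : Set P) ⊆ T ∧ K ⊆ ⋃ y ∈ E, {x : P | wayBelow y x} := by
  classical
  have hch : ∀ x : K, ∃ y, y ∈ T ∧ wayBelow y (x : P) := by
    intro x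
    obtain ⟨y, hyT, hyx⟩ := hcov x x.2
    exact ⟨y, hyT, hyx⟩
  choose f hf1 hf2 using hch
  have hcov2 : K ⊆ ⋃ x : K, {z : P | wayBelow (f x) z} :=
    fun z hz => Set.mem_iUnion.2 ⟨⟨z, hz⟩, hf2 ⟨z, hz⟩⟩
  obtain ⟨t, ht⟩ := hK.elim_finite_subcover _
    (fun x : K => s16_wbabove_open hscott hcont (f x)) hcov2
  refine ⟨t.image f, ?_, ?_, ?_⟩
  · obtain ⟨z, hz⟩ := hKne
    obtain ⟨x, hxt, -⟩ := Set.mem_iUnion₂.1 (ht hz)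
    exact ⟨f x, Finset.mem_image_of_mem f hxt⟩
  · intro y hy
    simp only [Finset.coe_image, Set.mem_image, Finset.mem_coe] at hy
    obtain ⟨x, -, rfl⟩ := hy
    exact hf1 x
  · intro z hz
    obtain ⟨x, hxt, hzx⟩ := Set.mem_iUnion₂.1 (ht hz)
    exact Set.mem_biUnion (Finset.mem_image_of_mem f hxt) hzx

end Stmt16Aux

/-- for a continuous domain `X` with the Scott topology, the
`⇒_U`-topology on `UX` equals the relative Scott topology inherited from
`Q(X)` ordered by reverse inclusion. -/
theorem stmt_16 {P : Type*} [PartialOrder P] [TopologicalSpace P]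
    (hscott : ∀ U : Set P, IsOpen U ↔ ScottOpens U)
    (hcont : IsContinuousDomain P) :
    (∀ 𝒰 : Set (Set P), UOpen 𝒰 →
        ∃ 𝒲 : Set (Set P), SOQ 𝒲 ∧ 𝒰 = {A | A ∈ 𝒲 ∧ InUX A}) ∧
    (∀ 𝒲 : Set (Set P), SOQ 𝒲 → UOpen {A | A ∈ 𝒲 ∧ InUX A}) := by
  have hQX : ∀ A : Set P, InUX A → IsQ A := fun A => s16_IsQ_of_InUX hscott
  constructor
  · -- relative-Scott-open implied: every UOpen set extends to a Scott open of Q(X)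
    intro 𝒰 h𝒰
    refine ⟨{K | IsQ K ∧ ∃ A ∈ 𝒰, K ⊆ A}, ⟨?_, ?_, ?_⟩, ?_⟩
    · exact fun K hK => hK.1
    · rintro K K' ⟨hKQ, A, hA, hKA⟩ hK'Q hK'K
      exact ⟨hK'Q, A, hA, hK'K.trans hKA⟩
    · rintro 𝒦 S hQ h𝒦ne h𝒦dir hlub ⟨hSQ, A₀, hA₀𝒰, hSA₀⟩
      obtain ⟨F₀, hF₀ne, hA₀eq⟩ := h𝒰.1 A₀ hA₀𝒰
      obtain ⟨D, hD1, hD2, hD3⟩ := s16_enum hscott hcont F₀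
      set ℱ : Set (Set P) := {B | ∃ E : Finset P, E.Nonempty ∧ B = ucl (E : Set P) ∧
        ∃ K ∈ 𝒦, K ⊆ ⋃ y ∈ E, {x : P | wayBelow y x}} with hℱdef
      have hmk : ∀ K ∈ 𝒦, ∀ T : Set P, (∀ x ∈ K, ∃ y ∈ T, wayBelow y x) →
          ∃ E : Finset P, E.Nonempty ∧ (↑E : Set P) ⊆ T ∧ ucl (E : Set P) ∈ ℱ ∧
            K ⊆ ⋃ y ∈ E, {x : P | wayBelow y x} := by
        intro K hK T hT
        obtain ⟨E, hEne, hET, hEcov⟩ := s16_cover hscott hcont (hQ K hK).2.1 (hQ K hK).1 hT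
        exact ⟨E, hEne, hET, ⟨E, hEne, rfl, K, hK, hEcov⟩, hEcov⟩
      have hUDir : UDir ℱ := by
        refine ⟨?_, ?_, ?_⟩
        · rintro B ⟨E, hEne, rfl, -⟩
          exact ⟨E, hEne, rfl⟩
        · obtain ⟨K₀, hK₀⟩ := h𝒦ne
          obtain ⟨E, -, -, hEℱ, -⟩ := hmk K₀ hK₀ Set.univ (fun x _ => by
            obtain ⟨y, hy⟩ := (hcont.2 x).1
            exact ⟨y, trivial, hy⟩)
          exact ⟨_, hEℱ⟩
        · rintro B₁ ⟨E₁, hE₁ne, rfl, K₁, hK₁, hK₁cov⟩ B₂ ⟨E₂, hE₂ne, rfl, K₂, hK₂, hK₂cov⟩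
          obtain ⟨K₃, hK₃, h31, h32⟩ := h𝒦dir K₁ hK₁ K₂ hK₂
          have hT : ∀ x ∈ K₃, ∃ y ∈ ucl (E₁ : Set P) ∩ ucl (E₂ : Set P), wayBelow y x := by
            intro x hx
            obtain ⟨e₁, he₁E, he₁x⟩ := Set.mem_iUnion₂.1 (hK₁cov (h31 hx))
            obtain ⟨e₂, he₂E, he₂x⟩ := Set.mem_iUnion₂.1 (hK₂cov (h32 hx))
            obtain ⟨c, hc, hc1, hc2⟩ := (hcont.2 x).2.1 e₁ he₁x e₂ he₂x
            obtain ⟨y, hcy, hyx⟩ := s16_interp hcont hc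
            refine ⟨y, ⟨?_, ?_⟩, hyx⟩
            · exact (s16_mem_ucl hscott).2 ⟨e₁, Finset.mem_coe.2 he₁E,
                hc1.trans (s16_wb_le hcy)⟩
            · exact (s16_mem_ucl hscott).2 ⟨e₂, Finset.mem_coe.2 he₂E,
                hc2.trans (s16_wb_le hcy)⟩
          obtain ⟨E₃, hE₃ne, hE₃T, hE₃ℱ, -⟩ := hmk K₃ hK₃ _ hT
          exact ⟨_, hE₃ℱ, s16_ucl_subset_ucl hscott (fun e he => (hE₃T he).1),
            s16_ucl_subset_ucl hscott (fun e he => (hE₃T he).2)⟩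
      have hsubA₀ : ⋂₀ 𝒦 ⊆ A₀ := (s16_sInter_subset_lubQ hscott hQ hlub).trans hSA₀
      have hUConv : UConv ℱ A₀ := by
        refine ⟨hUDir, F₀, hF₀ne, hA₀eq, F₀.card, D, hD1, hD2, ?_⟩
        intro d hd
        have hVsub : ⋂₀ 𝒦 ⊆ ⋃ i, {x : P | wayBelow (d i) x} := by
          intro z hz
          obtain ⟨i, hwb⟩ := hD3 d hd z (hA₀eq ▸ hsubA₀ hz)
          exact Set.mem_iUnion.2 ⟨i, hwb⟩
        obtain ⟨K, hK, hKV⟩ := s16_wf hscott hcont hQ h𝒦ne h𝒦dir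
          (isOpen_iUnion fun i => s16_wbabove_open hscott hcont (d i)) hVsub
        have hT : ∀ x ∈ K, ∃ y ∈ ⋃ i, ucl ({d i} : Set P), wayBelow y x := by
          intro x hx
          obtain ⟨i, hdix⟩ := Set.mem_iUnion.1 (hKV hx)
          obtain ⟨y, hdy, hyx⟩ := s16_interp hcont hdix
          exact ⟨y, Set.mem_iUnion.2 ⟨i, (s16_mem_ucl hscott).2
            ⟨d i, rfl, s16_wb_le hdy⟩⟩, hyx⟩
        obtain ⟨E, hEne, hET, hEℱ, -⟩ := hmk K hK _ hT
        refine ⟨_, hEℱ, ?_⟩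
        intro x hx
        obtain ⟨e, heE, hex⟩ := (s16_mem_ucl hscott).1 hx
        obtain ⟨i, hei⟩ := Set.mem_iUnion.1 (hET heE)
        obtain ⟨di, hdi, hdie⟩ := (s16_mem_ucl hscott).1 hei
        rw [Set.mem_singleton_iff] at hdi
        exact Set.mem_iUnion.2 ⟨i, (s16_mem_ucl hscott).2 ⟨d i, rfl, hdi ▸ hdie.trans hex⟩⟩
      obtain ⟨B, hBℱ, hB𝒰⟩ := h𝒰.2 ℱ A₀ hUConv hA₀𝒰
      obtain ⟨E, hEne, hBeq, K, hK, hKcov⟩ := hBℱ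
      refine ⟨K, hK, hQ K hK, B, hB𝒰, ?_⟩
      intro x hx
      obtain ⟨y, hyE, hyx⟩ := Set.mem_iUnion₂.1 (hKcov hx)
      exact hBeq ▸ (s16_mem_ucl hscott).2 ⟨y, Finset.mem_coe.2 hyE, s16_wb_le hyx⟩
    · ext A
      simp only [Set.mem_setOf_eq]
      constructor
      · intro hA
        exact ⟨⟨hQX A (h𝒰.1 A hA), A, hA, subset_rfl⟩, h𝒰.1 A hA⟩
      · rintro ⟨⟨hAQ, A', hA'𝒰, hAA'⟩, hAUX⟩
        exact s16_uopen_up hscott hcont h𝒰 hAUX hAA' hA'𝒰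
  · -- every relative Scott open is UOpen
    intro 𝒲 h𝒲
    refine ⟨fun A hA => hA.2, ?_⟩
    intro ℱ A hconv hA
    have hℱdir := hconv.1
    have hQs : ∀ B ∈ ℱ, IsQ B := fun B hB => hQX B (hℱdir.1 B hB)
    have hSQ : IsQ (⋂₀ ℱ) := s16_isQ_sInter hscott hcont hQs hℱdir.2.1 hℱdir.2.2
    have hlub : IsLubQ ℱ (⋂₀ ℱ) := ⟨hSQ, fun K hK => Set.sInter_subset_of_mem hK,
      fun T _ hTsub => Set.subset_sInter hTsub⟩
    have hS𝒲 : ⋂₀ ℱ ∈ 𝒲 :=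
      h𝒲.2.1 A _ hA.1 hSQ (s16_sInter_subset_of_uconv hscott hconv)
    obtain ⟨B, hBℱ, hB𝒲⟩ := h𝒲.2.2 ℱ _ hQs hℱdir.2.1 hℱdir.2.2 hlub hS𝒲
    exact ⟨B, hBℱ, hB𝒲, hℱdir.1 B hBℱ⟩
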